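/- Let S be the set of points (ψ,z⁺,z⁻,θ,δp) ∈ {0,1}³ × ℝ² satisfying z⁺ + z⁻ = ψ, θ̲·z⁺ + θ ≥ θ̲, θ̄·z⁻ + θ ≤ θ̄, δp ≥ θ̄·δB̲·z⁺ + θ̲·δB̄·z⁻, δp ≤ θ̄·δB̄·z⁺ + θ̲·δB̲·z⁻, θ̄·δB̲·z⁺ + θ̄·δB̄·z⁻ + δB̄·θ − δp ≤ θ̄·δB̄, θ̄·δB̄·z⁺ + θ̄·δB̲·z⁻ + δB̲·θ − δp ≥ θ̄·δB̲, θ̲·δB̄·z⁺ + θ̲·δB̲·z⁻ + δB̄·θ − δp ≥ θ̲·δB̄, and θ̲·δB̲·z⁺ + θ̲·δB̄·z⁻ + δB̲·θ − δp ≤ θ̲·δB̲. Then S = P₀ ∪ P₁ ∪ P₂. -/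
import Mathlib


abbrev Pt := ℝ × ℝ × ℝ × ℝ × ℝ

def P0 (tl tu : ℝ) : Set Pt :=
  {p | p.1 = 0 ∧ p.2.1 = 0 ∧ p.2.2.1 = 0 ∧ p.2.2.2.2 = 0 ∧ tl ≤ p.2.2.2.1 ∧ p.2.2.2.1 ≤ tu}

def P1 (tu bl bu : ℝ) : Set Pt :=
  {p | p.1 = 1 ∧ p.2.1 = 1 ∧ p.2.2.1 = 0 ∧ 0 ≤ p.2.2.2.1 ∧ p.2.2.2.1 ≤ tu ∧
    bl * p.2.2.2.1 ≤ p.2.2.2.2 ∧ p.2.2.2.2 ≤ bu * p.2.2.2.1}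

def P2 (tl bl bu : ℝ) : Set Pt :=
  {p | p.1 = 1 ∧ p.2.1 = 0 ∧ p.2.2.1 = 1 ∧ tl ≤ p.2.2.2.1 ∧ p.2.2.2.1 ≤ 0 ∧
    bu * p.2.2.2.1 ≤ p.2.2.2.2 ∧ p.2.2.2.2 ≤ bl * p.2.2.2.1}

theorem stmt_12 (tl tu bl bu : ℝ) (h1 : tl < 0) (h2 : 0 < tu) (h3 : bl < 0) (h4 : 0 < bu) :
    {p : Pt | p.1 ∈ ({0, 1} : Set ℝ) ∧ p.2.1 ∈ ({0, 1} : Set ℝ) ∧ p.2.2.1 ∈ ({0, 1} : Set ℝ) ∧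
      p.2.1 + p.2.2.1 = p.1 ∧
      tl * p.2.1 + p.2.2.2.1 ≥ tl ∧
      tu * p.2.2.1 + p.2.2.2.1 ≤ tu ∧
      p.2.2.2.2 ≥ tu * bl * p.2.1 + tl * bu * p.2.2.1 ∧
      p.2.2.2.2 ≤ tu * bu * p.2.1 + tl * bl * p.2.2.1 ∧
      tu * bl * p.2.1 + tu * bu * p.2.2.1 + bu * p.2.2.2.1 - p.2.2.2.2 ≤ tu * bu ∧
      tu * bu * p.2.1 + tu * bl * p.2.2.1 + bl * p.2.2.2.1 - p.2.2.2.2 ≥ tu * bl ∧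
      tl * bu * p.2.1 + tl * bl * p.2.2.1 + bu * p.2.2.2.1 - p.2.2.2.2 ≥ tl * bu ∧
      tl * bl * p.2.1 + tl * bu * p.2.2.1 + bl * p.2.2.2.1 - p.2.2.2.2 ≤ tl * bl}
    = P0 tl tu ∪ P1 tu bl bu ∪ P2 tl bl bu := by
  ext ⟨ps, z1, z2, th, dp⟩
  simp only [Set.mem_setOf_eq, Set.mem_union, Set.mem_insert_iff, Set.mem_singleton_iff,
    P0, P1, P2]
  constructor
  · rintro ⟨hps, hz1, hz2, hsum, c1, c2, c3, c4, c5, c6, c7, c8⟩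
    rcases hz1 with rfl | rfl <;> rcases hz2 with rfl | rfl <;>
      rcases hps with hp | hp <;> simp_all <;> linarith
  · rintro ((⟨hp, h1', h2', h3', h4', h5'⟩ | ⟨hp, h1', h2', h3', h4', h5', h6'⟩) |
      ⟨hp, h1', h2', h3', h4', h5', h6'⟩) <;>
      subst hp <;> subst h1' <;> subst h2' <;>
      refine ⟨by norm_num, by norm_num, by norm_num, by ring, by linarith, by linarith,
        by nlinarith, by nlinarith, by nlinarith, by nlinarith, by nlinarith, by nlinarith⟩
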